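/- Let Ω = (a,b) × (c,d) ⊆ ℝ² be an open rectangle containing the point (x₀,t₀), let ν : Ω → ℝ, and let f : Ω → ℝ be a positive twice continuously differentiable solution of f_xx − f_tt = νf on Ω. Let w = u + jv be a continuously differentiable 𝔻-valued function on Ω satisfying the Vekua equation w_z̄ = −(f_z/f)·w̄ on Ω. Set Φ₁ = u/f and Φ₂ = v/f, and for a real constant c define g(x,t) = f(x,t)·[2(∫_{x₀}^{x} Φ₁(η,t) dη + ∫_{t₀}^{t} Φ₂(x₀,ξ) dξ) + c]. Then g is a real-valued solution of the Klein-Gordon equation g_xx − g_tt = νg on Ω. -/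

import Mathlib

noncomputable section

open Filter Topology MeasureTheory

/-- Hyperbolic (duplex) numbers 𝔻, modeled as pairs `(Re z, Im z)` with `j ^ 2 = 1`. -/
abbrev Hyp : Type := ℝ × ℝ

/-- Real part of a hyperbolic number. -/
def hre (a : Hyp) : ℝ := a.1

/-- Imaginary part of a hyperbolic number. -/
def him (a : Hyp) : ℝ := a.2

/-- The hyperbolic imaginary unit `j`. -/
def hj : Hyp := (0, 1)

/-- Hyperbolic multiplication: `(x+tj)(x'+t'j) = (xx'+tt') + (xt'+tx')j`. -/
def hmul (a b : Hyp) : Hyp := (a.1 * b.1 + a.2 * b.2, a.1 * b.2 + a.2 * b.1)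

/-- Hyperbolic conjugation: `conj (x+tj) = x - tj`. -/
def hconj (a : Hyp) : Hyp := (a.1, -a.2)

/-- Invertibility of a hyperbolic number: `x² ≠ t²`. -/
def IsInv (a : Hyp) : Prop := a.1 ^ 2 ≠ a.2 ^ 2

/-- Hyperbolic inverse `z⁻¹ = z̄ / |z|²` with `|z|² = x² - t²`. -/
def hinv (a : Hyp) : Hyp := (a.1 / (a.1 ^ 2 - a.2 ^ 2), -a.2 / (a.1 ^ 2 - a.2 ^ 2))

/-- Hyperbolic division. -/
def hdiv (a b : Hyp) : Hyp := hmul a (hinv b)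

/-- Partial derivative in the first (`x`) variable. -/
def pdx (g : Hyp → ℝ) (p : Hyp) : ℝ := deriv (fun s => g (s, p.2)) p.1

/-- Partial derivative in the second (`t`) variable. -/
def pdt (g : Hyp → ℝ) (p : Hyp) : ℝ := deriv (fun s => g (p.1, s)) p.2

/-- The wave operator `□g = g_xx - g_tt`. -/
def waveOp (g : Hyp → ℝ) (p : Hyp) : ℝ := pdx (pdx g) p - pdt (pdt g) p

/-- `w_z = ½(∂_x + j ∂_t) w = ½((u_x+v_t) + (v_x+u_t)j)` for a 𝔻-valued `w = u + jv`. -/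
def dz (w : Hyp → Hyp) (p : Hyp) : Hyp :=
  ((pdx (fun q => (w q).1) p + pdt (fun q => (w q).2) p) / 2,
   (pdx (fun q => (w q).2) p + pdt (fun q => (w q).1) p) / 2)

/-- `w_z̄ = ½(∂_x - j ∂_t) w = ½((u_x-v_t) + (v_x-u_t)j)` for a 𝔻-valued `w = u + jv`. -/
def dzbar (w : Hyp → Hyp) (p : Hyp) : Hyp :=
  ((pdx (fun q => (w q).1) p - pdt (fun q => (w q).2) p) / 2,
   (pdx (fun q => (w q).2) p - pdt (fun q => (w q).1) p) / 2)

/-- `f_z = ½(f_x + j f_t)` for a real-valued `f`. -/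
def rz (f : Hyp → ℝ) (p : Hyp) : Hyp := (pdx f p / 2, pdt f p / 2)

/-- `f_z̄ = ½(f_x - j f_t)` for a real-valued `f`. -/
def rzbar (f : Hyp → ℝ) (p : Hyp) : Hyp := (pdx f p / 2, -(pdt f p) / 2)

/-- 𝔻-differentiability at `z₀`: the difference quotient `(f z - f z₀)·(z - z₀)⁻¹`
tends to `d` as `z → z₀` through points with `z - z₀` invertible. -/
def HasHDerivAt (f : Hyp → Hyp) (d : Hyp) (z₀ : Hyp) : Prop :=
  Filter.Tendsto (fun z => hmul (f z - f z₀) (hinv (z - z₀)))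
    (nhdsWithin z₀ {z | IsInv (z - z₀)}) (nhds d)

/-- `F Ḡ - F̄ G`. -/
def pairDenom (F G : Hyp → Hyp) (z : Hyp) : Hyp :=
  hmul (F z) (hconj (G z)) - hmul (hconj (F z)) (G z)

/-- Characteristic coefficient `a_(F,G) = -(F̄ G_z̄ - F_z̄ Ḡ)/(F Ḡ - F̄ G)`. -/
def aFG (F G : Hyp → Hyp) (z : Hyp) : Hyp :=
  - hdiv (hmul (hconj (F z)) (dzbar G z) - hmul (dzbar F z) (hconj (G z))) (pairDenom F G z)

/-- Characteristic coefficient `b_(F,G) = (F G_z̄ - F_z̄ G)/(F Ḡ - F̄ G)`. -/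
def bFG (F G : Hyp → Hyp) (z : Hyp) : Hyp :=
  hdiv (hmul (F z) (dzbar G z) - hmul (dzbar F z) (G z)) (pairDenom F G z)

/-- Characteristic coefficient `A_(F,G) = -(F̄ G_z - F_z Ḡ)/(F Ḡ - F̄ G)`. -/
def AFG (F G : Hyp → Hyp) (z : Hyp) : Hyp :=
  - hdiv (hmul (hconj (F z)) (dz G z) - hmul (dz F z) (hconj (G z))) (pairDenom F G z)

/-- Characteristic coefficient `B_(F,G) = (F G_z - F_z G)/(F Ḡ - F̄ G)`. -/
def BFG (F G : Hyp → Hyp) (z : Hyp) : Hyp :=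
  hdiv (hmul (F z) (dz G z) - hmul (dz F z) (G z)) (pairDenom F G z)

/-- A generating pair on `Ω`: twice continuously differentiable `F, G` with `Im(F̄G) ≠ 0`. -/
def IsGenPair (F G : Hyp → Hyp) (Ω : Set Hyp) : Prop :=
  ContDiffOn ℝ 2 F Ω ∧ ContDiffOn ℝ 2 G Ω ∧ ∀ z ∈ Ω, him (hmul (hconj (F z)) (G z)) ≠ 0

/-- The idempotent `e₁ = (1+j)/2`. -/
def e1 : Hyp := (1/2, 1/2)

/-- The idempotent `e₂ = (1-j)/2`. -/
def e2 : Hyp := (1/2, -1/2)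

/-- Contour integral `∮_{∂R} h dz` over the counterclockwise boundary of the rectangle
`[x₁,x₂] × [t₁,t₂]`, with hyperbolic multiplication (`dz = dx` on horizontal sides,
`dz = j dt` on vertical sides). -/
def rectContourInt (h : Hyp → Hyp) (x₁ x₂ t₁ t₂ : ℝ) : Hyp :=
  ((∫ x in x₁..x₂, h (x, t₁)) - ∫ x in x₁..x₂, h (x, t₂)) +
    hmul hj ((∫ t in t₁..t₂, h (x₂, t)) - ∫ t in t₁..t₂, h (x₁, t))

/-- Integral `∫_{[z₀,z]} h dζ` along the straight segment from `z₀` to `z`,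
with hyperbolic multiplication. -/
def segInt (h : Hyp → Hyp) (z₀ z : Hyp) : Hyp :=
  ∫ s in (0:ℝ)..1, hmul (h (z₀ + s • (z - z₀))) (z - z₀)

/-- Natural powers in 𝔻. -/
def hpow (a : Hyp) : ℕ → Hyp
  | 0 => (1, 0)
  | n + 1 => hmul a (hpow a n)

/-- Integer powers in 𝔻 (for invertible base). -/
def hzpow (a : Hyp) : ℤ → Hyp
  | Int.ofNat n => hpow a n
  | Int.negSucc n => hinv (hpow a (n + 1))

/-- if `f > 0` is a C² solution of `□f = νf` on an open rectangle `Ω` and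
`w = u + jv ∈ C¹(Ω)` solves `w_z̄ = −(f_z/f)w̄`, then with `Φ₁ = u/f`, `Φ₂ = v/f`, the
function `g = f·[2(∫_{x₀}^{x} Φ₁(η,t) dη + ∫_{t₀}^{t} Φ₂(x₀,ξ) dξ) + c]` solves
`g_xx − g_tt = νg` on `Ω`. -/

lemma hasDerivAt_fst' {F : Hyp → ℝ} {p : Hyp} (h : DifferentiableAt ℝ F p) :
    HasDerivAt (fun s => F (s, p.2)) (fderiv ℝ F p (1, 0)) p.1 := by
  have hl : HasDerivAt (fun s : ℝ => ((s, p.2) : Hyp)) ((1 : ℝ), (0 : ℝ)) p.1 :=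
    HasDerivAt.prodMk (hasDerivAt_id p.1) (hasDerivAt_const p.1 p.2)
  have := h.hasFDerivAt.comp_hasDerivAt p.1 (by simpa using hl)
  exact this

lemma hasDerivAt_snd' {F : Hyp → ℝ} {p : Hyp} (h : DifferentiableAt ℝ F p) :
    HasDerivAt (fun s => F (p.1, s)) (fderiv ℝ F p (0, 1)) p.2 := by
  have hl : HasDerivAt (fun s : ℝ => ((p.1, s) : Hyp)) ((0 : ℝ), (1 : ℝ)) p.2 :=
    HasDerivAt.prodMk (hasDerivAt_const p.2 p.1) (hasDerivAt_id p.2)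
  have := h.hasFDerivAt.comp_hasDerivAt p.2 (by simpa using hl)
  exact this

lemma swap_le {F : ℝ → ℝ → ℝ} {a b c d : ℝ} (hab : a ≤ b) (hcd : c ≤ d)
    (hF : MeasureTheory.IntegrableOn (Function.uncurry F) (Set.Ioc a b ×ˢ Set.Ioc c d)) :
    ∫ x in a..b, ∫ y in c..d, F x y = ∫ y in c..d, ∫ x in a..b, F x y := by
  rw [intervalIntegral.integral_of_le hab, intervalIntegral.integral_of_le hcd]
  simp_rw [intervalIntegral.integral_of_le hab, intervalIntegral.integral_of_le hcd]
  apply MeasureTheory.integral_integral_swap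
  rwa [Measure.prod_restrict, ← Measure.volume_eq_prod] at *

lemma my_swap {F : ℝ → ℝ → ℝ} (a b c d : ℝ)
    (hF : ContinuousOn (Function.uncurry F) (Set.uIcc a b ×ˢ Set.uIcc c d)) :
    ∫ x in a..b, ∫ y in c..d, F x y = ∫ y in c..d, ∫ x in a..b, F x y := by
  have hint : ∀ a' b' c' d' : ℝ, Set.uIcc a' b' ⊆ Set.uIcc a b → Set.uIcc c' d' ⊆ Set.uIcc c d →
      MeasureTheory.IntegrableOn (Function.uncurry F) (Set.Ioc a' b' ×ˢ Set.Ioc c' d') := by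
    intro a' b' c' d' h1 h2
    apply ((hF.mono (Set.prod_mono h1 h2)).integrableOn_compact
      (isCompact_uIcc.prod isCompact_uIcc)).mono_set
    exact Set.prod_mono (Set.Ioc_subset_Icc_self.trans Set.Icc_subset_uIcc) (Set.Ioc_subset_Icc_self.trans Set.Icc_subset_uIcc)
  rcases le_total a b with hab | hab <;> rcases le_total c d with hcd | hcd
  · exact swap_le hab hcd (hint _ _ _ _ subset_rfl subset_rfl)
  · rw [intervalIntegral.integral_symm d c]
    simp_rw [intervalIntegral.integral_symm d c, intervalIntegral.integral_neg]
    rw [swap_le hab hcd (by rw [Set.uIcc_comm c d] at hint; exact hint _ _ _ _ subset_rfl subset_rfl)]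
  · rw [intervalIntegral.integral_symm b a]
    simp_rw [intervalIntegral.integral_symm b a, intervalIntegral.integral_neg]
    rw [swap_le hab hcd (by rw [Set.uIcc_comm a b] at hint; exact hint _ _ _ _ subset_rfl subset_rfl)]
  · rw [intervalIntegral.integral_symm b a, intervalIntegral.integral_symm d c]
    simp_rw [intervalIntegral.integral_symm b a, intervalIntegral.integral_symm d c,
      intervalIntegral.integral_neg]
    rw [swap_le hab hcd (by rw [Set.uIcc_comm a b, Set.uIcc_comm c d] at hint; exact hint _ _ _ _ subset_rfl subset_rfl)]

theorem solution_kleinGordon_from_vekua (a b c d x₀ t₀ : ℝ) (Ω : Set Hyp)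
    (hΩ : Ω = Set.Ioo a b ×ˢ Set.Ioo c d) (hz₀ : ((x₀, t₀) : Hyp) ∈ Ω)
    (ν f : Hyp → ℝ) (hf : ContDiffOn ℝ 2 f Ω) (hfpos : ∀ p ∈ Ω, 0 < f p)
    (hKG : ∀ p ∈ Ω, waveOp f p = ν p * f p)
    (w : Hyp → Hyp) (hw : ContDiffOn ℝ 1 w Ω)
    (hVekua : ∀ p ∈ Ω, dzbar w p = - hmul (hdiv (rz f p) (f p, 0)) (hconj (w p)))
    (c₀ : ℝ) (g : Hyp → ℝ)
    (hg : ∀ p : Hyp, g p =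
      f p * (2 * ((∫ η in x₀..p.1, (w (η, p.2)).1 / f (η, p.2)) +
        ∫ ξ in t₀..p.2, (w (x₀, ξ)).2 / f (x₀, ξ)) + c₀)) :
    ∀ p ∈ Ω, waveOp g p = ν p * g p := by
  have hΩo : IsOpen Ω := by rw [hΩ]; exact isOpen_Ioo.prod isOpen_Ioo
  have hmem : ∀ q : Hyp, q ∈ Ω ↔ q.1 ∈ Set.Ioo a b ∧ q.2 ∈ Set.Ioo c d := by
    intro q; rw [hΩ]; exact Set.mem_prod
  have hx₀ : x₀ ∈ Set.Ioo a b := ((hmem _).1 hz₀).1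
  have ht₀ : t₀ ∈ Set.Ioo c d := ((hmem _).1 hz₀).2
  have hrect : ∀ q ∈ Ω, ∀ s ∈ Set.uIcc x₀ q.1, ∀ ξ ∈ Set.uIcc t₀ q.2, ((s, ξ) : Hyp) ∈ Ω := by
    intro q hq s hs ξ hξ
    exact (hmem _).2 ⟨Set.ordConnected_Ioo.uIcc_subset hx₀ ((hmem _).1 hq).1 hs,
      Set.ordConnected_Ioo.uIcc_subset ht₀ ((hmem _).1 hq).2 hξ⟩
  have hfne : ∀ q ∈ Ω, f q ≠ 0 := fun q hq => (hfpos q hq).ne'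
  -- regularity
  have hud : ContDiffOn ℝ 1 (fun r => (w r).1) Ω := contDiff_fst.comp_contDiffOn hw
  have hvd : ContDiffOn ℝ 1 (fun r => (w r).2) Ω := contDiff_snd.comp_contDiffOn hw
  have hfc1 : ContDiffOn ℝ 1 (fderiv ℝ f) Ω := hf.fderiv_of_isOpen hΩo (by norm_num)
  have hF1c : ContDiffOn ℝ 1 (fun q => fderiv ℝ f q (1, 0)) Ω := hfc1.clm_apply contDiffOn_const
  have hF2c : ContDiffOn ℝ 1 (fun q => fderiv ℝ f q (0, 1)) Ω := hfc1.clm_apply contDiffOn_const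
  have hfD : ∀ q ∈ Ω, DifferentiableAt ℝ f q := fun q hq =>
    (hf.contDiffAt (hΩo.mem_nhds hq)).differentiableAt (by norm_num)
  have huD : ∀ q ∈ Ω, DifferentiableAt ℝ (fun r => (w r).1) q := fun q hq =>
    (hud.contDiffAt (hΩo.mem_nhds hq)).differentiableAt (by norm_num)
  have hvD : ∀ q ∈ Ω, DifferentiableAt ℝ (fun r => (w r).2) q := fun q hq =>
    (hvd.contDiffAt (hΩo.mem_nhds hq)).differentiableAt (by norm_num)
  have hF1D : ∀ q ∈ Ω, DifferentiableAt ℝ (fun q => fderiv ℝ f q (1, 0)) q := fun q hq =>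
    (hF1c.contDiffAt (hΩo.mem_nhds hq)).differentiableAt (by norm_num)
  have hF2D : ∀ q ∈ Ω, DifferentiableAt ℝ (fun q => fderiv ℝ f q (0, 1)) q := fun q hq =>
    (hF2c.contDiffAt (hΩo.mem_nhds hq)).differentiableAt (by norm_num)
  -- continuity
  have hfcont : ContinuousOn f Ω := hf.continuousOn
  have hucont : ContinuousOn (fun r => (w r).1) Ω := hud.continuousOn
  have hvcont : ContinuousOn (fun r => (w r).2) Ω := hvd.continuousOn
  have hPcont : ContinuousOn (fun q => (w q).1 / f q) Ω := hucont.div hfcont hfne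
  have hQcont : ContinuousOn (fun q => (w q).2 / f q) Ω := hvcont.div hfcont hfne
  have hQx'cont : ContinuousOn (fun q =>
      (fderiv ℝ (fun r => (w r).2) q (1, 0) * f q - (w q).2 * fderiv ℝ f q (1, 0)) / f q ^ 2) Ω := by
    apply ContinuousOn.div
    · exact (((hvd.continuousOn_fderiv_of_isOpen hΩo le_rfl).clm_apply continuousOn_const).mul
        hfcont).sub (hvcont.mul hF1c.continuousOn)
    · exact hfcont.pow 2
    · exact fun q hq => pow_ne_zero 2 (hfne q hq)
  -- Vekua componentwise
  have hE : ∀ q ∈ Ω,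
      (fderiv ℝ (fun r => (w r).1) q (1, 0) * f q - fderiv ℝ (fun r => (w r).2) q (0, 1) * f q
        = fderiv ℝ f q (0, 1) * (w q).2 - fderiv ℝ f q (1, 0) * (w q).1) ∧
      (fderiv ℝ (fun r => (w r).2) q (1, 0) * f q - fderiv ℝ (fun r => (w r).1) q (0, 1) * f q
        = fderiv ℝ f q (1, 0) * (w q).2 - fderiv ℝ f q (0, 1) * (w q).1) := by
    intro q hq
    have h := hVekua q hq
    simp only [dzbar, hdiv, hmul, hinv, hconj, rz, Prod.mk.injEq, Prod.neg_mk, pdx, pdt] at h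
    rw [show deriv (fun s => (w (s, q.2)).1) q.1 = fderiv ℝ (fun r => (w r).1) q (1, 0) from
          (hasDerivAt_fst' (huD q hq)).deriv,
        show deriv (fun s => (w (q.1, s)).1) q.2 = fderiv ℝ (fun r => (w r).1) q (0, 1) from
          (hasDerivAt_snd' (huD q hq)).deriv,
        show deriv (fun s => (w (s, q.2)).2) q.1 = fderiv ℝ (fun r => (w r).2) q (1, 0) from
          (hasDerivAt_fst' (hvD q hq)).deriv,
        show deriv (fun s => (w (q.1, s)).2) q.2 = fderiv ℝ (fun r => (w r).2) q (0, 1) from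
          (hasDerivAt_snd' (hvD q hq)).deriv,
        show deriv (fun s => f (s, q.2)) q.1 = fderiv ℝ f q (1, 0) from
          (hasDerivAt_fst' (hfD q hq)).deriv,
        show deriv (fun s => f (q.1, s)) q.2 = fderiv ℝ f q (0, 1) from
          (hasDerivAt_snd' (hfD q hq)).deriv] at h
    obtain ⟨h1, h2⟩ := h
    have hfq := hfne q hq
    field_simp at h1 h2
    exact ⟨mul_left_cancel₀ hfq (by linear_combination h1),
      mul_left_cancel₀ (pow_ne_zero 3 hfq) (by linear_combination f q ^ 2 * h2)⟩
  -- partial derivatives of P = u/f and Q = v/f along coordinate lines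
  have hQxD : ∀ q ∈ Ω, HasDerivAt (fun s => (w (s, q.2)).2 / f (s, q.2))
      ((fderiv ℝ (fun r => (w r).2) q (1, 0) * f q - (w q).2 * fderiv ℝ f q (1, 0)) / f q ^ 2)
      q.1 := fun q hq =>
    (hasDerivAt_fst' (hvD q hq)).div (hasDerivAt_fst' (hfD q hq)) (hfne q hq)
  have hPtD : ∀ q ∈ Ω, HasDerivAt (fun s => (w (q.1, s)).1 / f (q.1, s))
      ((fderiv ℝ (fun r => (w r).1) q (0, 1) * f q - (w q).1 * fderiv ℝ f q (0, 1)) / f q ^ 2)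
      q.2 := fun q hq =>
    (hasDerivAt_snd' (huD q hq)).div (hasDerivAt_snd' (hfD q hq)) (hfne q hq)
  have hPtQx : ∀ q ∈ Ω,
      (fderiv ℝ (fun r => (w r).1) q (0, 1) * f q - (w q).1 * fderiv ℝ f q (0, 1)) / f q ^ 2
      = (fderiv ℝ (fun r => (w r).2) q (1, 0) * f q - (w q).2 * fderiv ℝ f q (1, 0)) / f q ^ 2 := by
    intro q hq
    congr 1
    linarith [(hE q hq).2]
  -- path-swap identity
  have key : ∀ q ∈ Ω,
      (∫ η in x₀..q.1, (w (η, q.2)).1 / f (η, q.2)) +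
        (∫ ξ in t₀..q.2, (w (x₀, ξ)).2 / f (x₀, ξ))
      = (∫ η in x₀..q.1, (w (η, t₀)).1 / f (η, t₀)) +
        (∫ ξ in t₀..q.2, (w (q.1, ξ)).2 / f (q.1, ξ)) := by
    intro q hq
    have hsub : Set.uIcc x₀ q.1 ×ˢ Set.uIcc t₀ q.2 ⊆ Ω := fun r hr =>
      hrect q hq r.1 hr.1 r.2 hr.2
    have hQ'icc : ∀ η ∈ Set.uIcc x₀ q.1, ContinuousOn (fun ξ => (fderiv ℝ (fun r => (w r).2)
        ((η, ξ) : Hyp) (1, 0) * f (η, ξ) - (w (η, ξ)).2 * fderiv ℝ f (η, ξ) (1, 0)) /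
        f (η, ξ) ^ 2) (Set.uIcc t₀ q.2) := fun η hη =>
      hQx'cont.comp ((continuous_const.prodMk continuous_id).continuousOn)
        (fun ξ hξ => hrect q hq η hη ξ hξ)
    have hQ'icc2 : ∀ ξ ∈ Set.uIcc t₀ q.2, ContinuousOn (fun η => (fderiv ℝ (fun r => (w r).2)
        ((η, ξ) : Hyp) (1, 0) * f (η, ξ) - (w (η, ξ)).2 * fderiv ℝ f (η, ξ) (1, 0)) /
        f (η, ξ) ^ 2) (Set.uIcc x₀ q.1) := fun ξ hξ =>
      hQx'cont.comp ((continuous_id.prodMk continuous_const).continuousOn)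
        (fun η hη => hrect q hq η hη ξ hξ)
    have step_inner : ∀ η ∈ Set.uIcc x₀ q.1,
        (w (η, q.2)).1 / f (η, q.2) - (w (η, t₀)).1 / f (η, t₀)
        = ∫ ξ in t₀..q.2, (fderiv ℝ (fun r => (w r).2) ((η, ξ) : Hyp) (1, 0) * f (η, ξ) -
            (w (η, ξ)).2 * fderiv ℝ f (η, ξ) (1, 0)) / f (η, ξ) ^ 2 := by
      intro η hη
      have hder : ∀ ξ ∈ Set.uIcc t₀ q.2, HasDerivAt (fun s => (w (η, s)).1 / f (η, s))
          ((fderiv ℝ (fun r => (w r).2) ((η, ξ) : Hyp) (1, 0) * f (η, ξ) -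
            (w (η, ξ)).2 * fderiv ℝ f (η, ξ) (1, 0)) / f (η, ξ) ^ 2) ξ := by
        intro ξ hξ
        have hmq := hrect q hq η hη ξ hξ
        have h := hPtD (η, ξ) hmq
        rw [hPtQx (η, ξ) hmq] at h
        exact h
      rw [intervalIntegral.integral_eq_sub_of_hasDerivAt hder ((hQ'icc η hη).intervalIntegrable)]
    have int1 : IntervalIntegrable (fun η => (w (η, q.2)).1 / f (η, q.2)) volume x₀ q.1 :=
      (hPcont.comp ((continuous_id.prodMk continuous_const).continuousOn)
        (fun η hη => hrect q hq η hη q.2 Set.right_mem_uIcc)).intervalIntegrable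
    have int2 : IntervalIntegrable (fun η => (w (η, t₀)).1 / f (η, t₀)) volume x₀ q.1 :=
      (hPcont.comp ((continuous_id.prodMk continuous_const).continuousOn)
        (fun η hη => hrect q hq η hη t₀ Set.left_mem_uIcc)).intervalIntegrable
    have int3 : IntervalIntegrable (fun ξ => (w (q.1, ξ)).2 / f (q.1, ξ)) volume t₀ q.2 :=
      (hQcont.comp ((continuous_const.prodMk continuous_id).continuousOn)
        (fun ξ hξ => hrect q hq q.1 Set.right_mem_uIcc ξ hξ)).intervalIntegrable
    have int4 : IntervalIntegrable (fun ξ => (w (x₀, ξ)).2 / f (x₀, ξ)) volume t₀ q.2 :=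
      (hQcont.comp ((continuous_const.prodMk continuous_id).continuousOn)
        (fun ξ hξ => hrect q hq x₀ Set.left_mem_uIcc ξ hξ)).intervalIntegrable
    have lhs_eq : (∫ η in x₀..q.1, (w (η, q.2)).1 / f (η, q.2)) -
        (∫ η in x₀..q.1, (w (η, t₀)).1 / f (η, t₀))
        = ∫ η in x₀..q.1, ∫ ξ in t₀..q.2, (fderiv ℝ (fun r => (w r).2) ((η, ξ) : Hyp) (1, 0) *
            f (η, ξ) - (w (η, ξ)).2 * fderiv ℝ f (η, ξ) (1, 0)) / f (η, ξ) ^ 2 := by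
      rw [← intervalIntegral.integral_sub int1 int2]
      exact intervalIntegral.integral_congr step_inner
    have hswap := my_swap (F := fun η ξ => (fderiv ℝ (fun r => (w r).2) ((η, ξ) : Hyp) (1, 0) *
        f (η, ξ) - (w (η, ξ)).2 * fderiv ℝ f (η, ξ) (1, 0)) / f (η, ξ) ^ 2) x₀ q.1 t₀ q.2
        (hQx'cont.mono hsub)
    have step2 : ∀ ξ ∈ Set.uIcc t₀ q.2,
        (∫ η in x₀..q.1, (fderiv ℝ (fun r => (w r).2) ((η, ξ) : Hyp) (1, 0) * f (η, ξ) -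
          (w (η, ξ)).2 * fderiv ℝ f (η, ξ) (1, 0)) / f (η, ξ) ^ 2)
        = (w (q.1, ξ)).2 / f (q.1, ξ) - (w (x₀, ξ)).2 / f (x₀, ξ) := by
      intro ξ hξ
      have hder : ∀ η ∈ Set.uIcc x₀ q.1, HasDerivAt (fun s => (w (s, ξ)).2 / f (s, ξ))
          ((fderiv ℝ (fun r => (w r).2) ((η, ξ) : Hyp) (1, 0) * f (η, ξ) -
            (w (η, ξ)).2 * fderiv ℝ f (η, ξ) (1, 0)) / f (η, ξ) ^ 2) η := fun η hη =>
        hQxD (η, ξ) (hrect q hq η hη ξ hξ)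
      rw [intervalIntegral.integral_eq_sub_of_hasDerivAt hder ((hQ'icc2 ξ hξ).intervalIntegrable)]
    have rhs_eq : (∫ ξ in t₀..q.2, ∫ η in x₀..q.1,
          (fderiv ℝ (fun r => (w r).2) ((η, ξ) : Hyp) (1, 0) * f (η, ξ) -
          (w (η, ξ)).2 * fderiv ℝ f (η, ξ) (1, 0)) / f (η, ξ) ^ 2)
        = (∫ ξ in t₀..q.2, (w (q.1, ξ)).2 / f (q.1, ξ)) -
          ∫ ξ in t₀..q.2, (w (x₀, ξ)).2 / f (x₀, ξ) := by
      rw [← intervalIntegral.integral_sub int3 int4]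
      exact intervalIntegral.integral_congr step2
    linarith [lhs_eq, hswap, rhs_eq]
  -- x-derivative of the bracket
  have hGx : ∀ q ∈ Ω, HasDerivAt (fun s => 2 * ((∫ η in x₀..s, (w (η, q.2)).1 / f (η, q.2)) +
      ∫ ξ in t₀..q.2, (w (x₀, ξ)).2 / f (x₀, ξ)) + c₀) (2 * ((w q).1 / f q)) q.1 := by
    intro q hq
    have hq1 : q.1 ∈ Set.Ioo a b := ((hmem q).1 hq).1
    have hq2 : q.2 ∈ Set.Ioo c d := ((hmem q).1 hq).2
    have hcontline : ContinuousOn (fun η => (w (η, q.2)).1 / f (η, q.2)) (Set.Ioo a b) :=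
      hPcont.comp ((continuous_id.prodMk continuous_const).continuousOn)
        (fun s hs => (hmem _).2 ⟨hs, hq2⟩)
    have hFTC : HasDerivAt (fun s => ∫ η in x₀..s, (w (η, q.2)).1 / f (η, q.2))
        ((w (q.1, q.2)).1 / f (q.1, q.2)) q.1 := by
      apply intervalIntegral.integral_hasDerivAt_right
      · exact (hPcont.comp ((continuous_id.prodMk continuous_const).continuousOn)
          (fun η hη => hrect q hq η hη q.2 Set.right_mem_uIcc)).intervalIntegrable
      · exact ContinuousOn.stronglyMeasurableAtFilter isOpen_Ioo hcontline q.1 hq1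
      · exact hcontline.continuousAt (Ioo_mem_nhds hq1.1 hq1.2)
    exact ((hFTC.add_const _).const_mul 2).add_const c₀
  -- t-derivative of the bracket
  have hGt : ∀ q ∈ Ω, HasDerivAt (fun s => 2 * ((∫ η in x₀..q.1, (w (η, s)).1 / f (η, s)) +
      ∫ ξ in t₀..s, (w (x₀, ξ)).2 / f (x₀, ξ)) + c₀) (2 * ((w q).2 / f q)) q.2 := by
    intro q hq
    have hq1 : q.1 ∈ Set.Ioo a b := ((hmem q).1 hq).1
    have hq2 : q.2 ∈ Set.Ioo c d := ((hmem q).1 hq).2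
    have hcontline : ContinuousOn (fun ξ => (w (q.1, ξ)).2 / f (q.1, ξ)) (Set.Ioo c d) :=
      hQcont.comp ((continuous_const.prodMk continuous_id).continuousOn)
        (fun s hs => (hmem _).2 ⟨hq1, hs⟩)
    have hFTC : HasDerivAt (fun s => ∫ ξ in t₀..s, (w (q.1, ξ)).2 / f (q.1, ξ))
        ((w (q.1, q.2)).2 / f (q.1, q.2)) q.2 := by
      apply intervalIntegral.integral_hasDerivAt_right
      · exact (hQcont.comp ((continuous_const.prodMk continuous_id).continuousOn)
          (fun ξ hξ => hrect q hq q.1 Set.right_mem_uIcc ξ hξ)).intervalIntegrable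
      · exact ContinuousOn.stronglyMeasurableAtFilter isOpen_Ioo hcontline q.2 hq2
      · exact hcontline.continuousAt (Ioo_mem_nhds hq2.1 hq2.2)
    have halt : HasDerivAt (fun s => 2 * ((∫ η in x₀..q.1, (w (η, t₀)).1 / f (η, t₀)) +
        ∫ ξ in t₀..s, (w (q.1, ξ)).2 / f (q.1, ξ)) + c₀) (2 * ((w q).2 / f q)) q.2 :=
      ((hFTC.const_add _).const_mul 2).add_const c₀
    apply halt.congr_of_eventuallyEq
    filter_upwards [Ioo_mem_nhds hq2.1 hq2.2] with s hs
    have hk : (∫ η in x₀..q.1, (w (η, s)).1 / f (η, s)) +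
        (∫ ξ in t₀..s, (w (x₀, ξ)).2 / f (x₀, ξ))
        = (∫ η in x₀..q.1, (w (η, t₀)).1 / f (η, t₀)) +
          (∫ ξ in t₀..s, (w (q.1, ξ)).2 / f (q.1, ξ)) :=
      key (q.1, s) ((hmem _).2 ⟨hq1, hs⟩)
    rw [hk]
  -- first partial derivatives of g
  have hgx : ∀ q ∈ Ω, HasDerivAt (fun s => g (s, q.2))
      (fderiv ℝ f q (1, 0) * (2 * ((∫ η in x₀..q.1, (w (η, q.2)).1 / f (η, q.2)) +
        ∫ ξ in t₀..q.2, (w (x₀, ξ)).2 / f (x₀, ξ)) + c₀) + 2 * (w q).1) q.1 := by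
    intro q hq
    have hfun : (fun s => g (s, q.2)) = fun s => f (s, q.2) *
        (2 * ((∫ η in x₀..s, (w (η, q.2)).1 / f (η, q.2)) +
          ∫ ξ in t₀..q.2, (w (x₀, ξ)).2 / f (x₀, ξ)) + c₀) := by
      funext s; exact hg (s, q.2)
    rw [hfun]
    have h := (hasDerivAt_fst' (hfD q hq)).mul (hGx q hq)
    simp only [Prod.mk.eta] at h
    have hval : f q * (2 * ((w q).1 / f q)) = 2 * (w q).1 := by
      field_simp [hfne q hq]
    rw [hval] at h
    exact h
  have hgt : ∀ q ∈ Ω, HasDerivAt (fun s => g (q.1, s))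
      (fderiv ℝ f q (0, 1) * (2 * ((∫ η in x₀..q.1, (w (η, q.2)).1 / f (η, q.2)) +
        ∫ ξ in t₀..q.2, (w (x₀, ξ)).2 / f (x₀, ξ)) + c₀) + 2 * (w q).2) q.2 := by
    intro q hq
    have hfun : (fun s => g (q.1, s)) = fun s => f (q.1, s) *
        (2 * ((∫ η in x₀..q.1, (w (η, s)).1 / f (η, s)) +
          ∫ ξ in t₀..s, (w (x₀, ξ)).2 / f (x₀, ξ)) + c₀) := by
      funext s; exact hg (q.1, s)
    rw [hfun]
    have h := (hasDerivAt_snd' (hfD q hq)).mul (hGt q hq)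
    simp only [Prod.mk.eta] at h
    have hval : f q * (2 * ((w q).2 / f q)) = 2 * (w q).2 := by
      field_simp [hfne q hq]
    rw [hval] at h
    exact h
  -- main computation
  intro p hp
  have hp1 : p.1 ∈ Set.Ioo a b := ((hmem p).1 hp).1
  have hp2 : p.2 ∈ Set.Ioo c d := ((hmem p).1 hp).2
  have hfq := hfne p hp
  have h2x : pdx (pdx g) p = fderiv ℝ (fun q => fderiv ℝ f q (1, 0)) p (1, 0) *
      (2 * ((∫ η in x₀..p.1, (w (η, p.2)).1 / f (η, p.2)) +
        ∫ ξ in t₀..p.2, (w (x₀, ξ)).2 / f (x₀, ξ)) + c₀) +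
      fderiv ℝ f p (1, 0) * (2 * ((w p).1 / f p)) +
      2 * fderiv ℝ (fun r => (w r).1) p (1, 0) := by
    have hev : (fun s => pdx g (s, p.2)) =ᶠ[𝓝 p.1] (fun s =>
        fderiv ℝ f (s, p.2) (1, 0) * (2 * ((∫ η in x₀..s, (w (η, p.2)).1 / f (η, p.2)) +
          ∫ ξ in t₀..p.2, (w (x₀, ξ)).2 / f (x₀, ξ)) + c₀) + 2 * (w (s, p.2)).1) := by
      filter_upwards [Ioo_mem_nhds hp1.1 hp1.2] with s hs
      exact (hgx (s, p.2) ((hmem _).2 ⟨hs, hp2⟩)).deriv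
    calc pdx (pdx g) p = deriv (fun s => pdx g (s, p.2)) p.1 := rfl
      _ = _ := hev.deriv_eq
      _ = _ := (((hasDerivAt_fst' (hF1D p hp)).mul (hGx p hp)).add
          ((hasDerivAt_fst' (huD p hp)).const_mul 2)).deriv
  have h2t : pdt (pdt g) p = fderiv ℝ (fun q => fderiv ℝ f q (0, 1)) p (0, 1) *
      (2 * ((∫ η in x₀..p.1, (w (η, p.2)).1 / f (η, p.2)) +
        ∫ ξ in t₀..p.2, (w (x₀, ξ)).2 / f (x₀, ξ)) + c₀) +
      fderiv ℝ f p (0, 1) * (2 * ((w p).2 / f p)) +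
      2 * fderiv ℝ (fun r => (w r).2) p (0, 1) := by
    have hev : (fun s => pdt g (p.1, s)) =ᶠ[𝓝 p.2] (fun s =>
        fderiv ℝ f (p.1, s) (0, 1) * (2 * ((∫ η in x₀..p.1, (w (η, s)).1 / f (η, s)) +
          ∫ ξ in t₀..s, (w (x₀, ξ)).2 / f (x₀, ξ)) + c₀) + 2 * (w (p.1, s)).2) := by
      filter_upwards [Ioo_mem_nhds hp2.1 hp2.2] with s hs
      exact (hgt (p.1, s) ((hmem _).2 ⟨hp1, hs⟩)).deriv
    calc pdt (pdt g) p = deriv (fun s => pdt g (p.1, s)) p.2 := rfl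
      _ = _ := hev.deriv_eq
      _ = _ := (((hasDerivAt_snd' (hF2D p hp)).mul (hGt p hp)).add
          ((hasDerivAt_snd' (hvD p hp)).const_mul 2)).deriv
  have hfxx : pdx (pdx f) p = fderiv ℝ (fun q => fderiv ℝ f q (1, 0)) p (1, 0) := by
    have hev : (fun s => pdx f (s, p.2)) =ᶠ[𝓝 p.1] (fun s => fderiv ℝ f (s, p.2) (1, 0)) := by
      filter_upwards [Ioo_mem_nhds hp1.1 hp1.2] with s hs
      exact (hasDerivAt_fst' (hfD (s, p.2) ((hmem _).2 ⟨hs, hp2⟩))).deriv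
    calc pdx (pdx f) p = deriv (fun s => pdx f (s, p.2)) p.1 := rfl
      _ = _ := hev.deriv_eq
      _ = _ := (hasDerivAt_fst' (hF1D p hp)).deriv
  have hftt : pdt (pdt f) p = fderiv ℝ (fun q => fderiv ℝ f q (0, 1)) p (0, 1) := by
    have hev : (fun s => pdt f (p.1, s)) =ᶠ[𝓝 p.2] (fun s => fderiv ℝ f (p.1, s) (0, 1)) := by
      filter_upwards [Ioo_mem_nhds hp2.1 hp2.2] with s hs
      exact (hasDerivAt_snd' (hfD (p.1, s) ((hmem _).2 ⟨hp1, hs⟩))).deriv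
    calc pdt (pdt f) p = deriv (fun s => pdt f (p.1, s)) p.2 := rfl
      _ = _ := hev.deriv_eq
      _ = _ := (hasDerivAt_snd' (hF2D p hp)).deriv
  have hKGp := hKG p hp
  have hE1 := (hE p hp).1
  simp only [waveOp] at hKGp ⊢
  rw [hfxx, hftt] at hKGp
  rw [h2x, h2t, hg p]
  field_simp
  linear_combination (f p * (2 * ((∫ η in x₀..p.1, (w (η, p.2)).1 / f (η, p.2)) +
    ∫ ξ in t₀..p.2, (w (x₀, ξ)).2 / f (x₀, ξ)) + c₀)) * hKGp + 2 * hE1
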